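/- Let (X, μ) be a measure space with μ a finite measure, and let w : X → ℝ be a measurable function with |w(x)| ≤ C for all x, for some constant C > 0. Suppose ∫_X w dμ = 0 and w is not μ-almost-everywhere equal to 0. Then the integral ∫_X w(x)·log(√(w(x)² + a²) − w(x)) dμ(x) tends to −∞ as a → 0⁺. -/

import Mathlib

open Filter Real MeasureTheory

private lemma sqrt_gt_abs {w a : ℝ} (ha : 0 < a) : |w| < Real.sqrt (w ^ 2 + a ^ 2) := by
  rw [show w ^ 2 + a ^ 2 = |w| ^ 2 + a ^ 2 by rw [sq_abs]]
  exact (Real.lt_sqrt (abs_nonneg w)).2 (by nlinarith)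

private lemma sp_pos {w a : ℝ} (ha : 0 < a) : 0 < Real.sqrt (w ^ 2 + a ^ 2) + w := by
  have := sqrt_gt_abs (w := w) ha
  have := neg_abs_le w
  linarith

private lemma sm_pos {w a : ℝ} (ha : 0 < a) : 0 < Real.sqrt (w ^ 2 + a ^ 2) - w := by
  have := sqrt_gt_abs (w := w) ha
  have := le_abs_self w
  linarith

private lemma sqrt_prod_eq {w a : ℝ} :
    (Real.sqrt (w ^ 2 + a ^ 2) - w) * (Real.sqrt (w ^ 2 + a ^ 2) + w) = a ^ 2 := by
  have h : Real.sqrt (w ^ 2 + a ^ 2) ^ 2 = w ^ 2 + a ^ 2 :=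
    Real.sq_sqrt (by positivity)
  nlinarith [h]

/-- key logarithmic identity -/
private lemma log_ident {w a : ℝ} (ha : 0 < a) :
    Real.log (Real.sqrt (w ^ 2 + a ^ 2) - w)
      = Real.log (a ^ 2) - Real.log (Real.sqrt (w ^ 2 + a ^ 2) + w) := by
  have h1 := sm_pos (w := w) ha
  have h2 := sp_pos (w := w) ha
  have := Real.log_mul (ne_of_gt h1) (ne_of_gt h2)
  rw [sqrt_prod_eq] at this
  linarith

/-- pointwise lower bound for the "plus" term -/
private lemma plus_lower {w a : ℝ} (ha : 0 < a) :
    min w 0 * Real.log a - 1 ≤ w * Real.log (Real.sqrt (w ^ 2 + a ^ 2) + w) := by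
  have h2 := sp_pos (w := w) ha
  rcases le_or_gt w 0 with hw | hw
  · -- w ≤ 0 : √(w²+a²)+w ≤ a, so log ≤ log a, multiply by w ≤ 0
    have hle : Real.sqrt (w ^ 2 + a ^ 2) + w ≤ a := by
      have h1 : Real.sqrt (w ^ 2 + a ^ 2) ≤ Real.sqrt ((-w + a) ^ 2) :=
        Real.sqrt_le_sqrt (by nlinarith)
      rw [Real.sqrt_sq (by linarith)] at h1
      linarith
    have hlog : Real.log (Real.sqrt (w ^ 2 + a ^ 2) + w) ≤ Real.log a :=
      Real.log_le_log h2 hle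
    have := mul_le_mul_of_nonpos_left hlog hw
    rw [min_eq_left hw]
    linarith
  · -- w > 0 : w·log(√+w) ≥ w·log w ≥ w - 1 ≥ -1
    have hle : w ≤ Real.sqrt (w ^ 2 + a ^ 2) + w := by
      have := Real.sqrt_nonneg (w ^ 2 + a ^ 2); linarith
    have hlog : Real.log w ≤ Real.log (Real.sqrt (w ^ 2 + a ^ 2) + w) :=
      Real.log_le_log hw hle
    have h3 : w * Real.log w ≤ w * Real.log (Real.sqrt (w ^ 2 + a ^ 2) + w) :=
      mul_le_mul_of_nonneg_left hlog (le_of_lt hw)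
    have h4 : Real.log w⁻¹ ≤ w⁻¹ - 1 := Real.log_le_sub_one_of_pos (by positivity)
    rw [Real.log_inv] at h4
    have h5 : -(w * Real.log w) ≤ 1 - w := by
      have := mul_le_mul_of_nonneg_left h4 (le_of_lt hw)
      have hne : w ≠ 0 := ne_of_gt hw
      field_simp at this ⊢
      nlinarith
    rw [min_eq_right (le_of_lt hw)]
    nlinarith

/-- a bounded measurable function is integrable w.r.t. a finite measure -/
private lemma integrable_of_bdd {X : Type*} [MeasurableSpace X] {μ : Measure X}
    [IsFiniteMeasure μ] {f : X → ℝ} (hf : Measurable f) {B : ℝ} (h : ∀ x, |f x| ≤ B) :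
    Integrable f μ :=
  (integrable_const B).mono' hf.aestronglyMeasurable (Eventually.of_forall h)

/-- If `μ` is a finite measure, `w` is measurable and bounded by `C > 0`, has zero mean,
and is not `μ`-a.e. zero, then `∫ w · log (√(w² + a²) − w) dμ → −∞` as `a → 0⁺`. -/
theorem integral_tendsto_atBot_of_mean_zero {X : Type*} [MeasurableSpace X] (μ : Measure X)
    [IsFiniteMeasure μ] (w : X → ℝ) (hw : Measurable w) (C : ℝ) (hC : 0 < C)
    (hbound : ∀ x, |w x| ≤ C) (hmean : ∫ x, w x ∂μ = 0)
    (hne : ¬ (w =ᵐ[μ] fun _ => (0 : ℝ))) :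
    Tendsto (fun a : ℝ =>
        ∫ x, w x * Real.log (Real.sqrt ((w x) ^ 2 + a ^ 2) - w x) ∂μ)
      (nhdsWithin 0 (Set.Ioi 0)) atBot := by
  -- integrability of w and of min w 0
  have hw_int : Integrable w μ := integrable_of_bdd hw hbound
  have hmin_meas : Measurable (fun x => min (w x) 0) := hw.min measurable_const
  have hmin_bdd : ∀ x, |min (w x) 0| ≤ C := by
    intro x
    rw [abs_le]
    constructor
    · have := neg_abs_le (w x); have := hbound x
      exact le_min (by linarith) (by linarith)
    · exact le_trans (min_le_right _ _) (le_of_lt hC)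
  have hmin_int : Integrable (fun x => min (w x) 0) μ := integrable_of_bdd hmin_meas hmin_bdd
  set m : ℝ := ∫ x, min (w x) 0 ∂μ with hm_def
  set V : ℝ := (μ Set.univ).toReal with hV_def
  -- m < 0
  have hm_neg : m < 0 := by
    rcases lt_or_eq_of_le (integral_nonpos (fun x => min_le_right (w x) 0)) with h | h
    · exact h
    exfalso
    have hnn : 0 ≤ᵐ[μ] fun x => -min (w x) 0 :=
      Eventually.of_forall fun x => by simp [neg_nonneg, min_le_right]
    have hz : ∫ x, -min (w x) 0 ∂μ = 0 := by
      rw [integral_neg, h, neg_zero]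
    have hae := (integral_eq_zero_iff_of_nonneg_ae hnn hmin_int.neg).1 hz
    have hwnn : 0 ≤ᵐ[μ] w := by
      filter_upwards [hae] with x hx
      have hx' : min (w x) 0 = 0 := by simpa using hx
      exact min_eq_right_iff.1 hx'
    have := (integral_eq_zero_iff_of_nonneg_ae hwnn hw_int).1 hmean
    exact hne this
  -- key upper bound for the integral, for every a > 0
  have key : ∀ a : ℝ, 0 < a →
      (∫ x, w x * Real.log (Real.sqrt ((w x) ^ 2 + a ^ 2) - w x) ∂μ)
        ≤ V + (-m) * Real.log a := by
    intro a ha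
    -- integrability of the "plus" term
    set u : ℝ := Real.sqrt (C ^ 2 + a ^ 2) + C with hu_def
    have hu_pos : 0 < u := by
      have := Real.sqrt_nonneg (C ^ 2 + a ^ 2); positivity
    set B : ℝ := C * (|Real.log (a ^ 2 / u)| + |Real.log u|) with hB_def
    have hg_meas : Measurable (fun x =>
        w x * Real.log (Real.sqrt ((w x) ^ 2 + a ^ 2) + w x)) :=
      hw.mul (Real.measurable_log.comp
        (((Real.continuous_sqrt.measurable.comp ((hw.pow_const 2).add_const (a ^ 2)))).add hw))
    have hg_bdd : ∀ x, |w x * Real.log (Real.sqrt ((w x) ^ 2 + a ^ 2) + w x)| ≤ B := by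
      intro x
      have hb := hbound x
      have hsp := sp_pos (w := w x) ha
      have hsm := sm_pos (w := w x) ha
      have hsmu : Real.sqrt ((w x) ^ 2 + a ^ 2) - w x ≤ u := by
        have h1 : Real.sqrt ((w x) ^ 2 + a ^ 2) ≤ Real.sqrt (C ^ 2 + a ^ 2) :=
          Real.sqrt_le_sqrt (by nlinarith [abs_le.1 hb])
        have h2 := (abs_le.1 hb).1
        rw [hu_def]; linarith
      have hspu : Real.sqrt ((w x) ^ 2 + a ^ 2) + w x ≤ u := by
        have h1 : Real.sqrt ((w x) ^ 2 + a ^ 2) ≤ Real.sqrt (C ^ 2 + a ^ 2) :=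
          Real.sqrt_le_sqrt (by nlinarith [abs_le.1 hb])
        have h2 := (abs_le.1 hb).2
        rw [hu_def]; linarith
      have hspl : a ^ 2 / u ≤ Real.sqrt ((w x) ^ 2 + a ^ 2) + w x := by
        have hprod := sqrt_prod_eq (w := w x) (a := a)
        have : Real.sqrt ((w x) ^ 2 + a ^ 2) + w x
            = a ^ 2 / (Real.sqrt ((w x) ^ 2 + a ^ 2) - w x) := by
          field_simp
          linarith [hprod]
        rw [this]
        exact div_le_div_of_nonneg_left (by positivity) hsm hsmu
      have hlog_up : Real.log (Real.sqrt ((w x) ^ 2 + a ^ 2) + w x) ≤ Real.log u :=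
        Real.log_le_log hsp hspu
      have hlog_lo : Real.log (a ^ 2 / u) ≤ Real.log (Real.sqrt ((w x) ^ 2 + a ^ 2) + w x) :=
        Real.log_le_log (by positivity) hspl
      have hlog_abs : |Real.log (Real.sqrt ((w x) ^ 2 + a ^ 2) + w x)|
          ≤ |Real.log (a ^ 2 / u)| + |Real.log u| := by
        rw [abs_le]
        constructor
        · have := neg_abs_le (Real.log (a ^ 2 / u))
          have := abs_nonneg (Real.log u)
          linarith
        · have := le_abs_self (Real.log u)
          have := abs_nonneg (Real.log (a ^ 2 / u))
          linarith
      rw [abs_mul, hB_def]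
      exact mul_le_mul hb hlog_abs (abs_nonneg _) (le_of_lt hC)
    have hg_int : Integrable (fun x =>
        w x * Real.log (Real.sqrt ((w x) ^ 2 + a ^ 2) + w x)) μ :=
      integrable_of_bdd hg_meas hg_bdd
    have hwl_int : Integrable (fun x => w x * Real.log (a ^ 2)) μ :=
      hw_int.mul_const _
    -- rewrite the integral
    have hrw : (∫ x, w x * Real.log (Real.sqrt ((w x) ^ 2 + a ^ 2) - w x) ∂μ)
        = - ∫ x, w x * Real.log (Real.sqrt ((w x) ^ 2 + a ^ 2) + w x) ∂μ := by
      have hpt : ∀ x, w x * Real.log (Real.sqrt ((w x) ^ 2 + a ^ 2) - w x)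
          = w x * Real.log (a ^ 2)
            - w x * Real.log (Real.sqrt ((w x) ^ 2 + a ^ 2) + w x) := by
        intro x
        rw [log_ident (w := w x) ha]
        ring
      rw [integral_congr_ae (Eventually.of_forall hpt), integral_sub hwl_int hg_int,
        integral_mul_const, hmean]
      ring
    rw [hrw]
    -- lower bound on the plus integral
    have hlb_int : Integrable (fun x => min (w x) 0 * Real.log a - 1) μ :=
      ((hmin_int.mul_const _).sub (integrable_const 1))
    have hmono : (∫ x, (min (w x) 0 * Real.log a - 1) ∂μ)
        ≤ ∫ x, w x * Real.log (Real.sqrt ((w x) ^ 2 + a ^ 2) + w x) ∂μ :=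
      integral_mono hlb_int hg_int (fun x => plus_lower (w := w x) ha)
    have hcomp : (∫ x, (min (w x) 0 * Real.log a - 1) ∂μ) = m * Real.log a - V := by
      rw [integral_sub (hmin_int.mul_const _) (integrable_const 1),
        integral_mul_const, integral_const]
      simp [hm_def, hV_def, Measure.real]
    rw [hcomp] at hmono
    linarith
  -- conclude
  have hlim : Tendsto (fun a : ℝ => V + (-m) * Real.log a)
      (nhdsWithin 0 (Set.Ioi 0)) atBot := by
    apply tendsto_atBot_add_const_left
    exact Tendsto.const_mul_atBot (by linarith) Real.tendsto_log_nhdsGT_zero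
  refine tendsto_atBot_mono' _ ?_ hlim
  filter_upwards [self_mem_nhdsWithin] with a ha
  exact key a ha
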